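/- If T is a G-Tambara functor such that T(G/H) = 0 for some subgroup H ≤ G, then T(G/K) = 0 for all subgroups K ≤ G. -/

import Mathlib

open CategoryTheory

/-- A (levelled) `G`-Tambara functor: a commutative ring `T(G/H)` for each subgroup
`H ≤ G`, with restriction ring homomorphisms, additive transfers, and multiplicative
norms (preserving `0`) along inclusions of subgroups, together with conjugation
isomorphisms. -/
structure TambaraFunctor.{u_1, u_2} (G : Type u_1) [Group G] [Fintype G] where
  /-- the level `T(G/H)` -/
  obj : Subgroup G → CommRingCat.{u_2}
  /-- restriction maps, which are ring homomorphisms -/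
  res : ∀ ⦃H K : Subgroup G⦄, H ≤ K → (obj K →+* obj H)
  /-- transfer maps, which are additive homomorphisms -/
  tr : ∀ ⦃H K : Subgroup G⦄, H ≤ K → (obj H →+ obj K)
  /-- norm maps, which are multiplicative homomorphisms sending `0` to `0` -/
  nm : ∀ ⦃H K : Subgroup G⦄, H ≤ K → (obj H →*₀ obj K)
  /-- conjugation isomorphisms -/
  conj : ∀ (g : G) (H : Subgroup G),
    obj H ≃+* obj (Subgroup.map (MulAut.conj g).toMonoidHom H)

/-- If `T(G/H) = 0` for some subgroup `H`, then `T(G/K) = 0` for every subgroup `K`. -/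
theorem stmt0 {G : Type*} [Group G] [Fintype G] (T : TambaraFunctor G)
    (H : Subgroup G) (hH : ∀ x y : T.obj H, x = y) :
    ∀ (K : Subgroup G) (x y : T.obj K), x = y := by
  have h10 : (1 : T.obj H) = 0 := hH 1 0
  have htop : (1 : T.obj ⊤) = 0 := by
    calc (1 : T.obj ⊤) = T.nm le_top 1 := (map_one _).symm
    _ = T.nm le_top 0 := by rw [h10]
    _ = 0 := map_zero _
  intro K x y
  have hK : (1 : T.obj K) = 0 := by
    calc (1 : T.obj K) = T.res le_top 1 := (map_one _).symm
    _ = T.res le_top 0 := by rw [htop]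
    _ = 0 := map_zero _
  calc x = x * 1 := (mul_one x).symm
  _ = y * 1 := by rw [hK, mul_zero, mul_zero]
  _ = y := mul_one y
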